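/- arXiv:2307.16334 — 2 statements merged into one kernel-verified Lean document; each statement's English description precedes it below -/
import Mathlib

section
/- The (n₁+m₁+n₂+m₂)×(n₁+m₁+n₂+m₂) coefficient matrix of the block Schwarz system (with block rows and columns ordered as (u_{Ω1}, u_{Γ1}, u_{Ω2}, u_{Γ2})) is invertible if and only if the (m₁+m₂)×(m₁+m₂) interface matrix with block form [[I_{m₁}, B₁],[B₂, I_{m₂}]] is invertible, and this holds if and only if the m₁×m₁ matrix I_{m₁} − B₁B₂ is invertible. -/
open Matrix

private theorem schwarz_det_aux
    {n₁ n₂ m₁ m₂ : ℕ}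
    (AΩ1 : Matrix (Fin n₁) (Fin n₁) ℝ) (AΩ2 : Matrix (Fin n₂) (Fin n₂) ℝ)
    (hA1 : IsUnit AΩ1.det) (hA2 : IsUnit AΩ2.det)
    (AΓ1 : Matrix (Fin n₁) (Fin m₁) ℝ) (AΓ2 : Matrix (Fin n₂) (Fin m₂) ℝ)
    (R21 : Matrix (Fin m₁) (Fin n₂) ℝ) (R12 : Matrix (Fin m₂) (Fin n₁) ℝ) :
    (Matrix.fromBlocks
        (Matrix.fromBlocks AΩ1 AΓ1 0 1)
        (Matrix.fromBlocks 0 0 (-R21) 0)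
        (Matrix.fromBlocks 0 0 (-R12) 0)
        (Matrix.fromBlocks AΩ2 AΓ2 0 1)).det
      = AΩ1.det * (AΩ2.det * (1 - (R12 * AΩ1⁻¹ * AΓ1) * (R21 * AΩ2⁻¹ * AΓ2)).det) := by
  haveI := AΩ1.invertibleOfIsUnitDet hA1
  haveI := AΩ2.invertibleOfIsUnitDet hA2
  haveI : Invertible (1 : Matrix (Fin m₁) (Fin m₁) ℝ) := invertibleOne
  haveI : Invertible (1 : Matrix (Fin m₂) (Fin m₂) ℝ) := invertibleOne
  haveI := fromBlocksZero₂₁Invertible AΩ1 AΓ1 (1 : Matrix (Fin m₁) (Fin m₁) ℝ)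
  rw [det_fromBlocks₁₁, invOf_fromBlocks_zero₂₁_eq]
  simp only [fromBlocks_multiply, det_fromBlocks_zero₂₁, det_one, mul_one,
    Matrix.mul_zero, Matrix.zero_mul, Matrix.mul_one, Matrix.neg_mul, Matrix.mul_neg,
    neg_neg, zero_add, add_zero, invOf_one, neg_zero]
  rw [sub_eq_add_neg, fromBlocks_neg, fromBlocks_add]
  simp only [add_zero, zero_add, neg_zero, neg_neg]
  rw [det_fromBlocks₁₁, invOf_eq_nonsing_inv, invOf_eq_nonsing_inv]
  simp only [Matrix.mul_assoc]

/-- The coefficient matrix of the block Schwarz system is invertible iff the interface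
matrix `[[I, B₁], [B₂, I]]` is invertible, which in turn holds iff `I − B₁B₂` is
invertible. -/
theorem block_schwarz_matrix_invertible_iff_interface_matrix_invertible
    {n₁ n₂ m₁ m₂ : ℕ} (hn₁ : 0 < n₁) (hn₂ : 0 < n₂) (hm₁ : 0 < m₁) (hm₂ : 0 < m₂)
    (AΩ1 : Matrix (Fin n₁) (Fin n₁) ℝ) (AΩ2 : Matrix (Fin n₂) (Fin n₂) ℝ)
    (hA1 : IsUnit AΩ1.det) (hA2 : IsUnit AΩ2.det)
    (AΓ1 : Matrix (Fin n₁) (Fin m₁) ℝ) (AΓ2 : Matrix (Fin n₂) (Fin m₂) ℝ)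
    (R21 : Matrix (Fin m₁) (Fin n₂) ℝ) (R12 : Matrix (Fin m₂) (Fin n₁) ℝ)
    (S : Matrix ((Fin n₁ ⊕ Fin m₁) ⊕ (Fin n₂ ⊕ Fin m₂))
               ((Fin n₁ ⊕ Fin m₁) ⊕ (Fin n₂ ⊕ Fin m₂)) ℝ)
    (hS : S = Matrix.fromBlocks
        (Matrix.fromBlocks AΩ1 AΓ1 0 1)
        (Matrix.fromBlocks 0 0 (-R21) 0)
        (Matrix.fromBlocks 0 0 (-R12) 0)
        (Matrix.fromBlocks AΩ2 AΓ2 0 1))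
    (M : Matrix (Fin m₁ ⊕ Fin m₂) (Fin m₁ ⊕ Fin m₂) ℝ)
    (hM : M = Matrix.fromBlocks 1 (R21 * AΩ2⁻¹ * AΓ2) (R12 * AΩ1⁻¹ * AΓ1) 1) :
    (IsUnit S ↔ IsUnit M) ∧
    (IsUnit M ↔ IsUnit (1 - (R21 * AΩ2⁻¹ * AΓ2) * (R12 * AΩ1⁻¹ * AΓ1))) := by
  set B₁ := R21 * AΩ2⁻¹ * AΓ2 with hB₁
  set B₂ := R12 * AΩ1⁻¹ * AΓ1 with hB₂
  have hdetS : S.det = AΩ1.det * (AΩ2.det * (1 - B₂ * B₁).det) := by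
    rw [hS]; exact schwarz_det_aux AΩ1 AΩ2 hA1 hA2 AΓ1 AΓ2 R21 R12
  have hdetM : M.det = (1 - B₂ * B₁).det := by
    rw [hM, det_fromBlocks_one₁₁]
  have hswap : (1 - B₁ * B₂).det = (1 - B₂ * B₁).det := by
    calc (1 - B₁ * B₂).det = (1 + (-B₁) * B₂).det := by
          rw [Matrix.neg_mul, ← sub_eq_add_neg]
      _ = (1 + B₂ * (-B₁)).det := det_one_add_mul_comm _ _
      _ = (1 - B₂ * B₁).det := by rw [Matrix.mul_neg, ← sub_eq_add_neg]
  constructor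
  · rw [Matrix.isUnit_iff_isUnit_det, Matrix.isUnit_iff_isUnit_det, hdetS, hdetM,
      IsUnit.mul_iff, IsUnit.mul_iff]
    tauto
  · rw [Matrix.isUnit_iff_isUnit_det, Matrix.isUnit_iff_isUnit_det, hdetM, hswap]
end

section
/- Suppose the operator norm of T = B₁B₂, induced by some norm on ℝ^{m₁}, satisfies ‖T‖ < 1. Then the interface system has a unique solution (λ₁*, λ₂*), and for every initial guess λ₁^{(0)} ∈ ℝ^{m₁} the Schwarz iterates λ₁^{(k)} = Φ(λ₁^{(k−1)}) converge to λ₁* and the associated second components λ₂^{(k)} = b₂ − B₂λ₁^{(k)} converge to λ₂*. -/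
open Matrix

/-- If the operator norm of `T = B₁B₂` induced by some norm on `ℝ^{m₁}` is `< 1`, then the
interface system has a unique solution `(λ₁*, λ₂*)`, the Schwarz iterates converge to
`λ₁*` from any initial guess, and the associated second components converge to `λ₂*`. -/
theorem schwarz_iterates_converge_of_contraction
    {n₁ n₂ m₁ m₂ : ℕ} (hn₁ : 0 < n₁) (hn₂ : 0 < n₂) (hm₁ : 0 < m₁) (hm₂ : 0 < m₂)
    (AΩ1 : Matrix (Fin n₁) (Fin n₁) ℝ) (AΩ2 : Matrix (Fin n₂) (Fin n₂) ℝ)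
    (hA1 : IsUnit AΩ1.det) (hA2 : IsUnit AΩ2.det)
    (AΓ1 : Matrix (Fin n₁) (Fin m₁) ℝ) (AΓ2 : Matrix (Fin n₂) (Fin m₂) ℝ)
    (R21 : Matrix (Fin m₁) (Fin n₂) ℝ) (R12 : Matrix (Fin m₂) (Fin n₁) ℝ)
    (f₁ : Fin n₁ → ℝ) (f₂ : Fin n₂ → ℝ)
    (B₁ : Matrix (Fin m₁) (Fin m₂) ℝ) (hB₁ : B₁ = R21 * AΩ2⁻¹ * AΓ2)
    (B₂ : Matrix (Fin m₂) (Fin m₁) ℝ) (hB₂ : B₂ = R12 * AΩ1⁻¹ * AΓ1)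
    (b₁ : Fin m₁ → ℝ) (hb₁ : b₁ = (R21 * AΩ2⁻¹) *ᵥ f₂)
    (b₂ : Fin m₂ → ℝ) (hb₂ : b₂ = (R12 * AΩ1⁻¹) *ᵥ f₁)
    (Φ : (Fin m₁ → ℝ) → (Fin m₁ → ℝ)) (hΦ : Φ = fun l₁ => b₁ - B₁ *ᵥ (b₂ - B₂ *ᵥ l₁))
    (ν : Seminorm ℝ (Fin m₁ → ℝ)) (hν : ∀ x, ν x = 0 → x = 0)
    (C : ℝ) (hC : C < 1) (hop : ∀ x, ν ((B₁ * B₂) *ᵥ x) ≤ C * ν x) :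
    ∃ (lstar₁ : Fin m₁ → ℝ) (lstar₂ : Fin m₂ → ℝ),
      (lstar₁ + B₁ *ᵥ lstar₂ = b₁ ∧ B₂ *ᵥ lstar₁ + lstar₂ = b₂) ∧
      (∀ (l₁ : Fin m₁ → ℝ) (l₂ : Fin m₂ → ℝ),
        (l₁ + B₁ *ᵥ l₂ = b₁ ∧ B₂ *ᵥ l₁ + l₂ = b₂) → l₁ = lstar₁ ∧ l₂ = lstar₂) ∧
      (∀ l₁0 : Fin m₁ → ℝ,
        Filter.Tendsto (fun k => Φ^[k] l₁0) Filter.atTop (nhds lstar₁) ∧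
        Filter.Tendsto (fun k => b₂ - B₂ *ᵥ Φ^[k] l₁0) Filter.atTop (nhds lstar₂)) := by
  classical
  set T : Matrix (Fin m₁) (Fin m₁) ℝ := B₁ * B₂ with hT
  have hne : Nonempty (Fin m₁) := ⟨⟨0, hm₁⟩⟩
  have hνpos : ∀ x : Fin m₁ → ℝ, x ≠ 0 → 0 < ν x := by
    intro x hx0
    rcases lt_or_eq_of_le (apply_nonneg ν x) with h | h
    · exact h
    · exact absurd (hν x h.symm) hx0
  have hC0 : 0 ≤ C := by
    set x : Fin m₁ → ℝ := Pi.single ⟨0, hm₁⟩ 1 with hx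
    have hx0 : x ≠ 0 := by
      intro h
      have := congrFun h ⟨0, hm₁⟩
      simp [hx] at this
    nlinarith [le_trans (apply_nonneg ν _) (hop x), hνpos x hx0]
  -- injectivity of (1 - T)
  have hinj : Function.Injective (Matrix.mulVecLin (1 - T)) := by
    rw [injective_iff_map_eq_zero]
    intro x hx0
    have hx : x = T *ᵥ x := by
      apply sub_eq_zero.mp
      simpa [Matrix.mulVecLin_apply, Matrix.sub_mulVec, Matrix.one_mulVec] using hx0
    by_contra hxne
    have h1 : ν x ≤ C * ν x := by nth_rewrite 1 [hx]; exact hop x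
    nlinarith [hνpos x hxne]
  have hsurj : Function.Surjective (Matrix.mulVecLin (1 - T)) :=
    (LinearMap.injective_iff_surjective).mp hinj
  obtain ⟨lstar₁, hl1⟩ := hsurj (b₁ - B₁ *ᵥ b₂)
  rw [Matrix.mulVecLin_apply, Matrix.sub_mulVec, Matrix.one_mulVec] at hl1
  set lstar₂ : Fin m₂ → ℝ := b₂ - B₂ *ᵥ lstar₁ with hl2
  -- normal form of Φ
  have hΦ' : ∀ l, Φ l = (b₁ - B₁ *ᵥ b₂) + T *ᵥ l := by
    intro l
    rw [hΦ]
    simp only [Matrix.mulVec_sub, hT, ← Matrix.mulVec_mulVec]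
    abel
  have hfix : Φ lstar₁ = lstar₁ := by
    rw [hΦ', ← hl1]; abel
  have hstep : ∀ y, Φ y - lstar₁ = T *ᵥ (y - lstar₁) := by
    intro y
    conv_lhs => rw [← hfix]
    rw [hΦ' y, hΦ' lstar₁, Matrix.mulVec_sub]
    abel
  -- system is solved
  have hbb : b₁ = lstar₁ - T *ᵥ lstar₁ + B₁ *ᵥ b₂ := by rw [hl1]; abel
  have hsys1 : lstar₁ + B₁ *ᵥ lstar₂ = b₁ := by
    rw [hbb, hl2, Matrix.mulVec_sub, hT, ← Matrix.mulVec_mulVec]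
    abel
  have hsys2 : B₂ *ᵥ lstar₁ + lstar₂ = b₂ := by rw [hl2]; abel
  refine ⟨lstar₁, lstar₂, ⟨hsys1, hsys2⟩, ?_, ?_⟩
  · -- uniqueness
    rintro l₁ l₂ ⟨h1, h2⟩
    have hl₂ : l₂ = b₂ - B₂ *ᵥ l₁ := by rw [← h2]; abel
    have hfixl : (1 - T) *ᵥ l₁ = b₁ - B₁ *ᵥ b₂ := by
      rw [hl₂, Matrix.mulVec_sub] at h1
      rw [Matrix.sub_mulVec, Matrix.one_mulVec, hT, ← Matrix.mulVec_mulVec, ← h1]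
      abel
    have hl1' : (1 - T) *ᵥ lstar₁ = b₁ - B₁ *ᵥ b₂ := by
      rw [Matrix.sub_mulVec, Matrix.one_mulVec, hl1]
    have heq : l₁ = lstar₁ := hinj (by simp only [Matrix.mulVecLin_apply]; rw [hfixl, hl1'])
    exact ⟨heq, by rw [hl₂, heq, hl2]⟩
  · -- convergence
    set e : Fin m₁ → (Fin m₁ → ℝ) := fun i j => if i = j then 1 else 0 with he
    set M : ℝ := ∑ i : Fin m₁, ν (e i) with hM
    have hub : ∀ x : Fin m₁ → ℝ, ν x ≤ M * ‖x‖ := by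
      intro x
      calc ν x = ν (∑ i : Fin m₁, x i • e i) := by rw [← pi_eq_sum_univ x]
        _ ≤ ∑ i : Fin m₁, ν (x i • e i) :=
            Finset.le_sum_of_subadditive (fun v => ν v) (map_zero ν).le
              (fun a b => map_add_le_add ν a b) _ _
        _ ≤ ∑ i : Fin m₁, ν (e i) * ‖x‖ := by
            refine Finset.sum_le_sum fun i _ => ?_
            rw [map_smul_eq_mul, mul_comm]
            exact mul_le_mul_of_nonneg_left (norm_le_pi_norm x i) (apply_nonneg ν _)
        _ = M * ‖x‖ := by rw [hM, Finset.sum_mul]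
    have hcont : Continuous fun x : Fin m₁ → ℝ => ν x := by
      rw [Metric.continuous_iff]
      intro x ε hε
      rcases le_or_gt M 0 with hM0 | hM0
      · refine ⟨1, one_pos, fun y _ => ?_⟩
        have h1 : ν y ≤ 0 := le_trans (hub y) (mul_nonpos_of_nonpos_of_nonneg hM0 (norm_nonneg _))
        have h2 : ν x ≤ 0 := le_trans (hub x) (mul_nonpos_of_nonpos_of_nonneg hM0 (norm_nonneg _))
        have h1' := apply_nonneg ν y
        have h2' := apply_nonneg ν x
        rw [Real.dist_eq]
        have hyx : ν y = ν x := by linarith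
        simpa [hyx] using hε
      · refine ⟨ε / M, div_pos hε hM0, fun y hy => ?_⟩
        rw [Real.dist_eq]
        rw [dist_eq_norm] at hy
        have h1 : ν y - ν x ≤ ν (y - x) := by
          have := map_add_le_add ν (y - x) x
          simp at this
          linarith
        have h2 : ν x - ν y ≤ ν (y - x) := by
          have := map_add_le_add ν (x - y) y
          have h3 : ν (x - y) = ν (y - x) := by
            rw [← neg_sub y x, map_neg_eq_map]
          simp [h3] at this
          linarith
        have h4 : ν (y - x) ≤ M * ‖y - x‖ := hub _
        have h5 : M * ‖y - x‖ < M * (ε / M) := mul_lt_mul_of_pos_left hy hM0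
        rw [mul_div_cancel₀ _ (ne_of_gt hM0)] at h5
        rw [abs_sub_lt_iff]
        constructor <;> linarith
    obtain ⟨z, hzs, hzmin⟩ :=
      (isCompact_sphere (0 : Fin m₁ → ℝ) 1).exists_isMinOn
        (NormedSpace.sphere_nonempty.2 zero_le_one) hcont.continuousOn
    have hz1 : ‖z‖ = 1 := by simpa using hzs
    have hzne : z ≠ 0 := by intro h; rw [h] at hz1; simp at hz1
    set c : ℝ := ν z with hc
    have hcpos : 0 < c := hνpos z hzne
    have hlb : ∀ x : Fin m₁ → ℝ, c * ‖x‖ ≤ ν x := by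
      intro x
      rcases eq_or_ne x 0 with rfl | hx0
      · simp
      · have hnx : 0 < ‖x‖ := norm_pos_iff.mpr hx0
        have hmem : ‖x‖⁻¹ • x ∈ Metric.sphere (0 : Fin m₁ → ℝ) 1 := by
          simp [norm_smul, abs_of_pos (inv_pos.mpr hnx), inv_mul_cancel₀ (ne_of_gt hnx)]
        have hmin := isMinOn_iff.mp hzmin _ hmem
        rw [map_smul_eq_mul, Real.norm_eq_abs, abs_of_pos (inv_pos.mpr hnx)] at hmin
        calc c * ‖x‖ ≤ (‖x‖⁻¹ * ν x) * ‖x‖ :=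
              mul_le_mul_of_nonneg_right hmin (norm_nonneg _)
          _ = ν x := by field_simp
    intro l₁0
    set d : Fin m₁ → ℝ := l₁0 - lstar₁ with hd
    have hiter : ∀ k : ℕ, Φ^[k] l₁0 - lstar₁ = (T ^ k) *ᵥ d := by
      intro k
      induction k with
      | zero => simp [hd]
      | succ k ih =>
        rw [Function.iterate_succ_apply', hstep, ih, Matrix.mulVec_mulVec, ← pow_succ']
    have hbound : ∀ k : ℕ, ν ((T ^ k) *ᵥ d) ≤ C ^ k * ν d := by
      intro k
      induction k with
      | zero => simp [Matrix.one_mulVec]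
      | succ k ih =>
        calc ν ((T ^ (k+1)) *ᵥ d) = ν (T *ᵥ ((T ^ k) *ᵥ d)) := by
              rw [Matrix.mulVec_mulVec, ← pow_succ']
          _ ≤ C * ν ((T ^ k) *ᵥ d) := hop _
          _ ≤ C * (C ^ k * ν d) := mul_le_mul_of_nonneg_left ih hC0
          _ = C ^ (k+1) * ν d := by ring
    have hnorm : ∀ k : ℕ, ‖Φ^[k] l₁0 - lstar₁‖ ≤ (c⁻¹ * ν d) * C ^ k := by
      intro k
      have h1 : c * ‖Φ^[k] l₁0 - lstar₁‖ ≤ C ^ k * ν d := by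
        calc c * ‖Φ^[k] l₁0 - lstar₁‖ ≤ ν (Φ^[k] l₁0 - lstar₁) := hlb _
          _ = ν ((T ^ k) *ᵥ d) := by rw [hiter]
          _ ≤ C ^ k * ν d := hbound k
      rw [← le_div_iff₀' hcpos] at h1
      calc ‖Φ^[k] l₁0 - lstar₁‖ ≤ C ^ k * ν d / c := h1
        _ = (c⁻¹ * ν d) * C ^ k := by ring
    have htend0 : Filter.Tendsto (fun k => ‖Φ^[k] l₁0 - lstar₁‖) Filter.atTop (nhds 0) := by
      have hgeo : Filter.Tendsto (fun k : ℕ => (c⁻¹ * ν d) * C ^ k) Filter.atTop (nhds 0) := by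
        have := tendsto_pow_atTop_nhds_zero_of_abs_lt_one (r := C)
          (abs_lt.mpr ⟨by linarith, hC⟩)
        simpa using this.const_mul (c⁻¹ * ν d)
      exact squeeze_zero (fun k => norm_nonneg _) hnorm hgeo
    have ht1 : Filter.Tendsto (fun k => Φ^[k] l₁0) Filter.atTop (nhds lstar₁) := by
      rw [tendsto_iff_norm_sub_tendsto_zero]
      exact htend0
    refine ⟨ht1, ?_⟩
    have hcont2 : Continuous fun x : Fin m₁ → ℝ => b₂ - B₂ *ᵥ x :=
      continuous_const.sub (Matrix.mulVecLin B₂).continuous_of_finiteDimensional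
    have := (hcont2.tendsto lstar₁).comp ht1
    exact this
end
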